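/- For integer r ≥ 1, the Fourier transform of the one-dimensional higher-order Gaussian kernel G_{2r}(x) = Q_{2r-2}(x)φ(x), where Q_{2r-2}(x) = Σ_{i=0}^{r-1} c_{2i} x^{2i} with c_{2i} = (-1)^i 2^{i-2r+1} (2r)! / (r! (2i+1)! (r-i-1)!), satisfies Ĝ_{2r}(λ) = ∫ e^{iλt} G_{2r}(t) dt = e^{-λ²/2} Σ_{s=0}^{r-1} λ^{2s}/(2^s s!). In particular, for the product kernel ψ^{2r}(x) = ∏_{j=1}^d G_{2r}(x_j) on ℝᵈ, its Fourier transform is e^{-‖λ‖²/2} ∏_{j=1}^d Σ_{s=0}^{r-1} λ_j^{2s}/(2^s s!). -/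

import Mathlib

open MeasureTheory Real Complex

/-- Coefficients of the higher-order Gaussian kernel. -/
noncomputable def cCoef (r i : ℕ) : ℝ :=
  (-1) ^ i * (2:ℝ) ^ ((i : ℤ) - 2 * (r : ℤ) + 1) * (Nat.factorial (2 * r)) /
    ((Nat.factorial r) * (Nat.factorial (2 * i + 1)) * (Nat.factorial (r - i - 1)))

/-- The polynomial Q_{2r-2}. -/
noncomputable def Qpoly (r : ℕ) (x : ℝ) : ℝ := ∑ i ∈ Finset.range r, cCoef r i * x ^ (2 * i)

/-- The 2r-order Gaussian-based kernel G_{2r}. -/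
noncomputable def G2r (r : ℕ) (x : ℝ) : ℝ :=
  Qpoly r x * ((2 * π)⁻¹.sqrt * Real.exp (-x ^ 2 / 2))

namespace Stmt4Aux
open Finset

noncomputable def aCoef (n k : ℕ) : ℝ :=
  if 2 * k ≤ n then (Nat.factorial n : ℝ) /
    (Nat.factorial k * 2 ^ k * Nat.factorial (n - 2 * k)) else 0

lemma aCoef_zero (n : ℕ) : aCoef n 0 = 1 := by
  simp [aCoef, Nat.factorial_ne_zero,
    div_self (by exact_mod_cast Nat.factorial_ne_zero n : ((Nat.factorial n : ℝ) ≠ 0))]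

lemma aCoef_of_gt {n k : ℕ} (h : n < 2 * k) : aCoef n k = 0 := by
  simp [aCoef, not_le.mpr h]

lemma aCoef_rec (n k : ℕ) : aCoef (n + 2) (k + 1) =
    (n + 1) * aCoef n k + aCoef (n + 1) (k + 1) := by
  rcases le_or_gt (2 * (k + 1)) (n + 1) with h1 | h1
  · -- main case : set d = n+1-2(k+1)
    obtain ⟨d, hd⟩ : ∃ d, n = 2 * k + d + 1 := ⟨n - 2 * k - 1, by omega⟩
    subst hd
    rw [aCoef, aCoef, aCoef, if_pos (by omega), if_pos (by omega), if_pos (by omega)]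
    rw [show 2 * k + d + 1 + 2 - 2 * (k + 1) = d + 1 by omega,
      show 2 * k + d + 1 - 2 * k = d + 1 by omega,
      show 2 * k + d + 1 + 1 - 2 * (k + 1) = d by omega,
      show 2 * k + d + 1 + 2 = (2 * k + d + 2) + 1 by omega,
      show 2 * k + d + 1 + 1 = (2 * k + d + 1) + 1 by omega]
    rw [Nat.factorial_succ (2 * k + d + 2), Nat.factorial_succ (2 * k + d + 1),
      Nat.factorial_succ k, Nat.factorial_succ d]
    have hk : (Nat.factorial k : ℝ) ≠ 0 := by exact_mod_cast Nat.factorial_ne_zero k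
    have hdf : (Nat.factorial d : ℝ) ≠ 0 := by exact_mod_cast Nat.factorial_ne_zero d
    have hnf : (Nat.factorial (2 * k + d + 1) : ℝ) ≠ 0 := by
      exact_mod_cast Nat.factorial_ne_zero _
    have h2 : (2 : ℝ) ^ k ≠ 0 := by positivity
    push_cast
    field_simp
    ring
  · rcases le_or_gt (2 * (k + 1)) (n + 2) with h2 | h2
    · -- boundary case : n + 2 = 2 * (k + 1), n = 2 * k
      have hn : n = 2 * k := by omega
      subst hn
      rw [aCoef, aCoef, aCoef, if_pos (by omega), if_pos (by omega), if_neg (by omega)]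
      rw [show 2 * k + 2 - 2 * (k + 1) = 0 by omega, show 2 * k - 2 * k = 0 by omega,
        show 2 * k + 2 = (2 * k + 1) + 1 by omega]
      rw [Nat.factorial_succ (2 * k + 1), Nat.factorial_succ (2 * k),
        Nat.factorial_succ k]
      have hk : (Nat.factorial k : ℝ) ≠ 0 := by exact_mod_cast Nat.factorial_ne_zero k
      have hnf : (Nat.factorial (2 * k) : ℝ) ≠ 0 := by
        exact_mod_cast Nat.factorial_ne_zero _
      have h2 : (2 : ℝ) ^ k ≠ 0 := by positivity
      push_cast
      field_simp
      ring
    · rw [aCoef_of_gt (by omega), aCoef_of_gt (by omega), aCoef_of_gt (by omega)]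
      ring

lemma pascal_sum (m : ℕ) (a : ℝ) :
    ∑ j ∈ range (m + 2), (-1 : ℝ) ^ j * ((m + 1).choose j) / (a + j)
      = ∑ j ∈ range (m + 1), (-1 : ℝ) ^ j * (m.choose j) / (a + j)
        - ∑ j ∈ range (m + 1), (-1 : ℝ) ^ j * (m.choose j) / ((a + 1) + j) := by
  have e1 : ∀ j ∈ range (m + 2),
      (-1 : ℝ) ^ j * ((m + 1).choose j) / (a + j)
        = (-1 : ℝ) ^ j * (m.choose j) / (a + j)
          - (if j = 0 then 0 else (-1 : ℝ) ^ (j - 1) * (m.choose (j - 1)) / ((a + 1) + (j - 1 : ℕ))) := by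
    intro j _
    match j with
    | 0 => simp
    | (k + 1) =>
      simp only [if_neg (Nat.succ_ne_zero k), Nat.add_sub_cancel]
      rw [Nat.choose_succ_succ]
      push_cast
      rw [show (a + 1) + (k : ℝ) = a + ((k : ℝ) + 1) by ring]
      ring
  rw [Finset.sum_congr rfl e1, Finset.sum_sub_distrib]
  congr 1
  · rw [Finset.sum_range_succ]
    simp [Nat.choose_eq_zero_of_lt (by omega : m < m + 1)]
  · rw [Finset.sum_range_succ'
      (fun j => (if j = 0 then (0:ℝ) else (-1 : ℝ) ^ (j - 1) * (m.choose (j - 1)) / ((a + 1) + (j - 1 : ℕ)))) (m + 1)]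
    simp

/-- The beta-type identity. -/
lemma beta_sum (m : ℕ) : ∀ a : ℝ, 0 < a →
    ∑ j ∈ range (m + 1), (-1 : ℝ) ^ j * (m.choose j) / (a + j) =
      (Nat.factorial m : ℝ) / ∏ k ∈ range (m + 1), (a + k) := by
  induction m with
  | zero => intro a ha; simp
  | succ m ih =>
    intro a ha
    rw [pascal_sum m a, ih a ha, ih (a + 1) (by positivity)]
    have hX : (0:ℝ) < ∏ k ∈ range (m + 1), (a + k) := by
      apply Finset.prod_pos; intro k _; positivity
    have hY : (0:ℝ) < ∏ k ∈ range (m + 1), ((a + 1) + k) := by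
      apply Finset.prod_pos; intro k _; positivity
    have hZ : (0:ℝ) < ∏ k ∈ range (m + 2), (a + k) := by
      apply Finset.prod_pos; intro k _; positivity
    have hrel1 : ∏ k ∈ range (m + 2), (a + k)
        = (∏ k ∈ range (m + 1), (a + k)) * (a + ((m : ℝ) + 1)) := by
      rw [Finset.prod_range_succ]; push_cast; ring_nf
    have hrel2 : ∏ k ∈ range (m + 2), (a + k)
        = a * ∏ k ∈ range (m + 1), ((a + 1) + k) := by
      rw [Finset.prod_range_succ' (fun k => a + (k : ℝ)) (m + 1)]
      push_cast
      rw [add_zero, mul_comm]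
      congr 1
      exact Finset.prod_congr rfl fun k _ => by ring
    rw [hrel1] at hZ
    rw [Nat.factorial_succ]
    rw [div_sub_div _ _ (ne_of_gt hX) (ne_of_gt hY), div_eq_div_iff (by positivity) (by positivity)]
    push_cast
    linear_combination ((m.factorial : ℝ) * (∏ k ∈ range (m + 1), ((a + 1) + k))) * hrel1
      - ((m.factorial : ℝ) * (∏ k ∈ range (m + 1), (a + k))) * hrel2

lemma oddProd (s : ℕ) : ∀ n : ℕ, s ≤ n →
    ∏ k ∈ range (n - s), ((s : ℝ) + 1/2 + k) =
      (Nat.factorial (2 * n) : ℝ) * s.factorial /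
        (n.factorial * (2 * s).factorial * 2 ^ (2 * (n - s))) := by
  intro n
  induction n with
  | zero =>
    intro hs
    interval_cases s
    simp
  | succ n ihn =>
    intro hs
    rcases Nat.eq_or_lt_of_le hs with h | h
    · subst h
      simp [div_self, mul_comm]
      rw [eq_comm, div_eq_one_iff_eq (by positivity)]
    · have hsn : s ≤ n := by omega
      have ih := ihn hsn
      rw [show n + 1 - s = (n - s) + 1 by omega, Finset.prod_range_succ, ih]
      rw [Nat.cast_sub hsn]
      rw [show 2 * (n + 1) = (2 * n + 1) + 1 by ring, Nat.factorial_succ (2 * n + 1),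
        Nat.factorial_succ (2 * n), Nat.factorial_succ n,
        show 2 * (n - s + 1) = 2 * (n - s) + 2 by omega, pow_add]
      have h1 : (n.factorial : ℝ) ≠ 0 := by exact_mod_cast Nat.factorial_ne_zero n
      have h2 : ((2 * s).factorial : ℝ) ≠ 0 := by exact_mod_cast Nat.factorial_ne_zero _
      have h3 : (2 : ℝ) ^ (2 * (n - s)) ≠ 0 := by positivity
      push_cast
      field_simp
      ring

lemma keyB (r s : ℕ) (hs : s < r) :
    ∑ i ∈ Finset.Ico s r, cCoef r i * aCoef (2 * i) (i - s) =
      (-1 : ℝ) ^ s / (2 ^ s * s.factorial) := by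
  have hm : r - s = (r - 1 - s) + 1 := by omega
  set m := r - 1 - s with hmdef
  rw [Finset.sum_Ico_eq_sum_range, hm]
  set K : ℝ := (-1 : ℝ) ^ s * 2 ^ s * (Nat.factorial (2 * r)) /
      (2 ^ (2 * r) * r.factorial * (2 * s).factorial * m.factorial) with hK
  have hterm : ∀ j ∈ range (m + 1),
      cCoef r (s + j) * aCoef (2 * (s + j)) (s + j - s) =
        K * ((-1 : ℝ) ^ j * (m.choose j) / (((s : ℝ) + 1/2) + j)) := by
    intro j hj
    have hjm : j ≤ m := by simp at hj; omega
    rw [show s + j - s = j by omega]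
    rw [cCoef, aCoef, if_pos (by omega)]
    rw [show 2 * (s + j) - 2 * j = 2 * s by omega,
      show r - (s + j) - 1 = m - j by omega]
    rw [show (↑(s + j) : ℤ) - 2 * (r : ℤ) + 1 = ((s + j + 1 : ℕ) : ℤ) - ((2 * r : ℕ) : ℤ) by
      push_cast; ring]
    rw [zpow_sub₀ (by norm_num : (2:ℝ) ≠ 0), zpow_natCast, zpow_natCast]
    rw [Nat.factorial_succ (2 * (s + j)), Nat.cast_choose ℝ hjm]
    have e1 : (Nat.factorial (2 * (s + j)) : ℝ) ≠ 0 := by exact_mod_cast Nat.factorial_ne_zero _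
    have e2 : (Nat.factorial r : ℝ) ≠ 0 := by exact_mod_cast Nat.factorial_ne_zero _
    have e3 : (Nat.factorial (m - j) : ℝ) ≠ 0 := by exact_mod_cast Nat.factorial_ne_zero _
    have e4 : (Nat.factorial j : ℝ) ≠ 0 := by exact_mod_cast Nat.factorial_ne_zero _
    have e5 : (Nat.factorial (2 * s) : ℝ) ≠ 0 := by exact_mod_cast Nat.factorial_ne_zero _
    have e6 : (Nat.factorial m : ℝ) ≠ 0 := by exact_mod_cast Nat.factorial_ne_zero _
    have e7 : ((2 : ℝ) * (s + j) + 1) ≠ 0 := by positivity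
    have e8 : ((s : ℝ) + 1/2) + j ≠ 0 := by positivity
    have e9 : (2 : ℝ) ^ (2 * r) ≠ 0 := by positivity
    have e10 : (2 : ℝ) ^ j ≠ 0 := by positivity
    have e11 : (2 : ℝ) ^ (s + j + 1) ≠ 0 := by positivity
    rw [hK]
    push_cast
    rw [pow_add, pow_add]
    field_simp
    ring
  rw [Finset.sum_congr rfl hterm, ← Finset.mul_sum]
  rw [beta_sum m ((s : ℝ) + 1/2) (by positivity)]
  have hP := oddProd s r (le_of_lt hs)
  rw [hm] at hP
  rw [hP, hK]
  have h1 : (r.factorial : ℝ) ≠ 0 := by exact_mod_cast Nat.factorial_ne_zero _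
  have h2 : ((2 * s).factorial : ℝ) ≠ 0 := by exact_mod_cast Nat.factorial_ne_zero _
  have h3 : (m.factorial : ℝ) ≠ 0 := by exact_mod_cast Nat.factorial_ne_zero _
  have h4 : ((2 * r).factorial : ℝ) ≠ 0 := by exact_mod_cast Nat.factorial_ne_zero _
  have h5 : (s.factorial : ℝ) ≠ 0 := by exact_mod_cast Nat.factorial_ne_zero _
  have hpow : (2 : ℝ) ^ (2 * (m + 1)) = 2 ^ (2 * r) / 2 ^ (2 * s) := by
    rw [eq_div_iff (by positivity), ← pow_add]
    congr 1
    omega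
  rw [hpow]
  have h6 : (2 : ℝ) ^ (2 * r) ≠ 0 := by positivity
  have h7 : (2 : ℝ) ^ (2 * s) ≠ 0 := by positivity
  have h8 : (2 : ℝ) ^ s ≠ 0 := by positivity
  field_simp
  ring

noncomputable def Ppoly : ℕ → ℝ → ℂ
  | 0, _ => 1
  | 1, l => Complex.I * l
  | (n + 2), l => (n + 1 : ℂ) * Ppoly n l + Complex.I * l * Ppoly (n + 1) l

lemma Pclosed : ∀ n : ℕ, ∀ l : ℝ,
    Ppoly n l = ∑ k ∈ range (n + 1), ((aCoef n k : ℝ) : ℂ) * (Complex.I * l) ^ (n - 2 * k) := by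
  intro n
  induction n using Nat.strong_induction_on with
  | _ n ih =>
    match n with
    | 0 => intro l; simp [Ppoly, aCoef_zero]
    | 1 =>
      intro l
      rw [Ppoly, Finset.sum_range_succ, Finset.sum_range_one]
      rw [aCoef_zero, aCoef_of_gt (by omega : 1 < 2 * 1)]
      norm_num
    | (n + 2) =>
      intro l
      rw [Ppoly, ih n (by omega) l, ih (n + 1) (by omega) l]
      simp only [show n + (1 + 1) = n + 2 from rfl]
      set x : ℂ := Complex.I * (l : ℂ) with hx
      have hstep : ∀ k ∈ range (n + 2),
          ((aCoef (n + 2) (k + 1) : ℝ) : ℂ) * x ^ (n + 2 - 2 * (k + 1))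
            = ((n : ℂ) + 1) * ((aCoef n k : ℝ) : ℂ) * x ^ (n - 2 * k)
              + ((aCoef (n + 1) (k + 1) : ℝ) : ℂ) * x ^ (n + 2 - 2 * (k + 1)) := by
        intro k _
        rw [show n + 2 - 2 * (k + 1) = n - 2 * k by omega, aCoef_rec n k]
        push_cast
        ring
      rw [Finset.sum_range_succ'
        (fun k => ((aCoef (n + 2) k : ℝ) : ℂ) * x ^ (n + 2 - 2 * k)) (n + 2)]
      rw [Finset.sum_congr rfl hstep, Finset.sum_add_distrib]
      have hS1 : ∑ k ∈ range (n + 2), ((n : ℂ) + 1) * ((aCoef n k : ℝ) : ℂ) * x ^ (n - 2 * k)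
          = ((n : ℂ) + 1) * ∑ k ∈ range (n + 1), ((aCoef n k : ℝ) : ℂ) * x ^ (n - 2 * k) := by
        rw [Finset.sum_range_succ, aCoef_of_gt (by omega : n < 2 * (n + 1))]
        rw [Finset.mul_sum]
        simp only [Complex.ofReal_zero, zero_mul, mul_zero, add_zero]
        exact Finset.sum_congr rfl fun k _ => by ring
      have hS2 : (∑ k ∈ range (n + 2), ((aCoef (n + 1) (k + 1) : ℝ) : ℂ) * x ^ (n + 2 - 2 * (k + 1)))
            + ((aCoef (n + 2) 0 : ℝ) : ℂ) * x ^ (n + 2 - 2 * 0)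
          = x * ∑ k ∈ range (n + 2), ((aCoef (n + 1) k : ℝ) : ℂ) * x ^ (n + 1 - 2 * k) := by
        have hRHS : ∀ k ∈ range (n + 2),
            x * (((aCoef (n + 1) k : ℝ) : ℂ) * x ^ (n + 1 - 2 * k))
              = ((aCoef (n + 1) k : ℝ) : ℂ) * x ^ (n + 2 - 2 * k) := by
          intro k _
          rcases le_or_gt (2 * k) (n + 1) with h | h
          · rw [show n + 2 - 2 * k = (n + 1 - 2 * k) + 1 by omega, pow_succ]
            ring
          · rw [aCoef_of_gt h]
            simp
        rw [Finset.mul_sum, Finset.sum_congr rfl hRHS]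
        rw [Finset.sum_range_succ'
          (fun k => ((aCoef (n + 1) k : ℝ) : ℂ) * x ^ (n + 2 - 2 * k)) (n + 1)]
        rw [Finset.sum_range_succ
          (fun k => ((aCoef (n + 1) (k + 1) : ℝ) : ℂ) * x ^ (n + 2 - 2 * (k + 1))) (n + 1)]
        rw [aCoef_of_gt (by omega : n + 1 < 2 * (n + 1 + 1)), aCoef_zero, aCoef_zero]
        push_cast
        ring
      rw [add_assoc, hS2, hS1]

lemma P2i (i : ℕ) (l : ℝ) : Ppoly (2 * i) l
    = ∑ s ∈ range (i + 1), ((aCoef (2 * i) (i - s) : ℝ) : ℂ) * (-1) ^ s * ((l : ℂ)) ^ (2 * s) := by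
  rw [Pclosed]
  have hsub : range (i + 1) ⊆ range (2 * i + 1) := by
    intro k hk; simp at hk ⊢; omega
  rw [← Finset.sum_subset hsub (fun k hk1 hk2 => by
    simp at hk1 hk2
    rw [aCoef_of_gt (by omega : 2 * i < 2 * k)]
    simp)]
  rw [← Finset.sum_range_reflect
    (fun k => ((aCoef (2 * i) k : ℝ) : ℂ) * (Complex.I * l) ^ (2 * i - 2 * k)) (i + 1)]
  refine Finset.sum_congr rfl fun s hs => ?_
  have hsle : s ≤ i := by simp at hs; omega
  rw [show i + 1 - 1 - s = i - s by omega,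
    show 2 * i - 2 * (i - s) = 2 * s by omega]
  have hI : (Complex.I * l) ^ (2 * s) = (-1 : ℂ) ^ s * (l : ℂ) ^ (2 * s) := by
    rw [pow_mul, pow_mul]
    rw [show (Complex.I * (l : ℂ)) ^ 2 = (-1) * (l : ℂ) ^ 2 by
      rw [mul_pow, Complex.I_sq]]
    rw [mul_pow]
  rw [hI]
  ring

lemma tri {M : Type*} [AddCommMonoid M] (n : ℕ) (f : ℕ → ℕ → M) :
    ∑ i ∈ range n, ∑ s ∈ range (i + 1), f i s
      = ∑ s ∈ range n, ∑ i ∈ Finset.Ico s n, f i s := by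
  induction n with
  | zero => simp
  | succ n ih =>
    rw [Finset.sum_range_succ, ih]
    rw [Finset.sum_range_succ (fun s => ∑ i ∈ Finset.Ico s (n + 1), f i s) n]
    have h1 : ∀ s ∈ range n, ∑ i ∈ Finset.Ico s (n + 1), f i s
        = (∑ i ∈ Finset.Ico s n, f i s) + f n s := by
      intro s hs
      simp at hs
      rw [Finset.sum_Ico_succ_top (by omega)]
    rw [Finset.sum_congr rfl h1, Finset.sum_add_distrib]
    rw [Finset.sum_Ico_succ_top (le_refl n), Finset.Ico_self, Finset.sum_empty, zero_add]
    rw [Finset.sum_range_succ (fun s => f n s) n]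
    abel

noncomputable def gker (n : ℕ) (lam : ℝ) (t : ℝ) : ℂ :=
  (t : ℂ) ^ n * Complex.exp (Complex.I * lam * t) * Complex.exp (-(t : ℂ) ^ 2 / 2)

lemma gker_cont (n : ℕ) (lam : ℝ) : Continuous (gker n lam) := by
  unfold gker
  fun_prop

lemma gker_integrable (n : ℕ) (lam : ℝ) : Integrable (gker n lam) := by
  have hre : Integrable (fun t : ℝ => |t| ^ n * Real.exp (-(1/2) * t ^ 2)) := by
    have h := (integrable_rpow_mul_exp_neg_mul_sq (b := 1/2) (by norm_num)
      (s := (n : ℝ)) (lt_of_lt_of_le (by norm_num) (Nat.cast_nonneg n))).abs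
    refine h.congr (ae_of_all _ fun x => ?_)
    simp [Real.rpow_natCast, abs_mul, _root_.abs_pow, _root_.abs_of_nonneg (Real.exp_nonneg _)]
  refine hre.mono' ((gker_cont n lam).aestronglyMeasurable) (ae_of_all _ fun t => ?_)
  unfold gker
  rw [norm_mul, norm_mul,
    ← Complex.ofReal_pow, Complex.norm_real, Real.norm_eq_abs, _root_.abs_pow, Complex.norm_exp, Complex.norm_exp]
  have h1 : (Complex.I * lam * t).re = 0 := by simp
  have h2 : (-(t : ℂ) ^ 2 / 2).re = -(1/2) * t ^ 2 := by
    rw [show -(t:ℂ)^2/2 = ((-(1/2) * t^2 : ℝ) : ℂ) by push_cast; ring]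
    exact Complex.ofReal_re _
  rw [h1, h2, Real.exp_zero]
  simp

lemma integral_gker_zero (lam : ℝ) :
    ∫ t : ℝ, gker 0 lam t = Real.sqrt (2 * Real.pi) * Complex.exp (-(lam : ℂ) ^ 2 / 2) := by
  have h := fourierIntegral_gaussian (b := (1/2 : ℂ)) (by norm_num) ((lam : ℂ))
  have heq : (fun t : ℝ => gker 0 lam t)
      = fun x : ℝ => Complex.exp (Complex.I * lam * x) * Complex.exp (-(1/2 : ℂ) * x ^ 2) := by
    funext x
    unfold gker
    rw [pow_zero, one_mul]
    congr 1
    ring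
  rw [heq, h]
  congr 1
  · rw [show (Real.pi : ℂ) / (1/2 : ℂ) = ((2 * Real.pi : ℝ) : ℂ) by push_cast; ring]
    rw [Real.sqrt_eq_rpow, Complex.ofReal_cpow (by positivity) (1/2 : ℝ)]
    norm_num
  · congr 1
    ring

lemma integral_gker_one (lam : ℝ) :
    ∫ t : ℝ, gker 1 lam t = Complex.I * lam * ∫ t : ℝ, gker 0 lam t := by
  have hd : ∀ t : ℝ, HasDerivAt (fun s : ℝ => gker 0 lam s)
      (Complex.I * lam * gker 0 lam t - gker 1 lam t) t := by
    intro t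
    have hq := ((((hasDerivAt_id ((t : ℝ) : ℂ)).const_mul (Complex.I * (lam : ℂ))).cexp).comp_ofReal
      : HasDerivAt (fun s : ℝ => Complex.exp (Complex.I * (lam : ℂ) * ((s : ℝ) : ℂ))) _ t)
    have hs := (((((hasDerivAt_pow 2 ((t : ℝ) : ℂ)).neg).div_const 2).cexp).comp_ofReal
      : HasDerivAt (fun s : ℝ => Complex.exp (-((s : ℝ) : ℂ) ^ 2 / 2)) _ t)
    have H := hq.mul hs
    have heq : gker 0 lam = fun s : ℝ =>
        Complex.exp (Complex.I * lam * s) * Complex.exp (-(s : ℂ) ^ 2 / 2) := by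
      funext s; unfold gker; rw [pow_zero, one_mul]
    rw [heq]
    refine H.congr_deriv ?_
    unfold gker
    simp only [id_eq, Nat.add_sub_cancel, pow_one, Pi.neg_apply, Pi.mul_apply]
    push_cast
    ring
  have i1 : Integrable (fun x : ℝ => Complex.I * ↑lam * gker 0 lam x) :=
    (gker_integrable 0 lam).const_mul _
  have h0 := integral_eq_zero_of_hasDerivAt_of_integrable hd
    (i1.sub (gker_integrable 1 lam)) (gker_integrable 0 lam)
  rw [integral_sub i1 (gker_integrable 1 lam), integral_const_mul] at h0
  linear_combination -h0

lemma integral_gker_rec (n : ℕ) (lam : ℝ) :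
    ∫ t : ℝ, gker (n + 2) lam t
      = ((n : ℂ) + 1) * (∫ t : ℝ, gker n lam t)
        + Complex.I * lam * ∫ t : ℝ, gker (n + 1) lam t := by
  have hd : ∀ t : ℝ, HasDerivAt (fun s : ℝ => gker (n + 1) lam s)
      (((n : ℂ) + 1) * gker n lam t + Complex.I * lam * gker (n + 1) lam t
        - gker (n + 2) lam t) t := by
    intro t
    have hp := ((hasDerivAt_pow (n + 1) ((t : ℝ) : ℂ)).comp_ofReal
      : HasDerivAt (fun s : ℝ => ((s : ℝ) : ℂ) ^ (n + 1)) _ t)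
    have hq := ((((hasDerivAt_id ((t : ℝ) : ℂ)).const_mul (Complex.I * (lam : ℂ))).cexp).comp_ofReal
      : HasDerivAt (fun s : ℝ => Complex.exp (Complex.I * (lam : ℂ) * ((s : ℝ) : ℂ))) _ t)
    have hs := (((((hasDerivAt_pow 2 ((t : ℝ) : ℂ)).neg).div_const 2).cexp).comp_ofReal
      : HasDerivAt (fun s : ℝ => Complex.exp (-((s : ℝ) : ℂ) ^ 2 / 2)) _ t)
    have H := (hp.mul hq).mul hs
    have heq : (fun s : ℝ => gker (n + 1) lam s) = fun s : ℝ =>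
        ((s : ℝ) : ℂ) ^ (n + 1) * Complex.exp (Complex.I * lam * s)
          * Complex.exp (-(s : ℂ) ^ 2 / 2) := by
      funext s; unfold gker; rfl
    rw [heq]
    refine H.congr_deriv ?_
    unfold gker
    simp only [id_eq, Nat.add_sub_cancel, pow_one, Pi.neg_apply, Pi.mul_apply]
    push_cast
    ring
  have i1 : Integrable (fun x : ℝ => ((n : ℂ) + 1) * gker n lam x) :=
    (gker_integrable n lam).const_mul _
  have i2 : Integrable (fun x : ℝ => Complex.I * ↑lam * gker (n + 1) lam x) :=
    (gker_integrable (n + 1) lam).const_mul _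
  have i12 : Integrable (fun x : ℝ => ((n : ℂ) + 1) * gker n lam x
      + Complex.I * ↑lam * gker (n + 1) lam x) := i1.add i2
  have h0 := integral_eq_zero_of_hasDerivAt_of_integrable hd
    (i12.sub (gker_integrable (n + 2) lam)) (gker_integrable (n + 1) lam)
  rw [integral_sub i12 (gker_integrable (n + 2) lam), integral_add i1 i2,
    integral_const_mul, integral_const_mul] at h0
  linear_combination -h0


lemma Mint_eq (lam : ℝ) : ∀ n : ℕ,
    (∫ t : ℝ, gker n lam t) = Ppoly n lam * ∫ t : ℝ, gker 0 lam t := by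
  intro n
  induction n using Nat.strong_induction_on with
  | _ n ih =>
    match n with
    | 0 => rw [Ppoly, one_mul]
    | 1 => rw [Ppoly]; exact integral_gker_one lam
    | (n + 2) =>
      rw [integral_gker_rec, ih n (by omega), ih (n + 1) (by omega), Ppoly]
      ring

lemma mainPoly (r : ℕ) (lam : ℝ) :
    ∑ i ∈ range r, ((cCoef r i : ℝ) : ℂ) * Ppoly (2 * i) lam
      = ∑ s ∈ range r, ((lam : ℂ)) ^ (2 * s) / ((2 : ℂ) ^ s * (Nat.factorial s : ℂ)) := by
  have h1 : ∀ i ∈ range r, ((cCoef r i : ℝ) : ℂ) * Ppoly (2 * i) lam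
      = ∑ s ∈ range (i + 1),
          (((cCoef r i * aCoef (2 * i) (i - s) : ℝ)) : ℂ) * (-1) ^ s * (lam : ℂ) ^ (2 * s) := by
    intro i _
    rw [P2i, Finset.mul_sum]
    exact Finset.sum_congr rfl fun s _ => by push_cast; ring
  rw [Finset.sum_congr rfl h1,
    tri r (fun i s => (((cCoef r i * aCoef (2 * i) (i - s) : ℝ)) : ℂ) * (-1) ^ s * (lam : ℂ) ^ (2 * s))]
  refine Finset.sum_congr rfl fun s hs => ?_
  simp only [Finset.mem_range] at hs
  have h2 : ∑ i ∈ Finset.Ico s r,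
        (((cCoef r i * aCoef (2 * i) (i - s) : ℝ)) : ℂ) * (-1) ^ s * (lam : ℂ) ^ (2 * s)
      = (((∑ i ∈ Finset.Ico s r, cCoef r i * aCoef (2 * i) (i - s) : ℝ)) : ℂ)
          * ((-1) ^ s * (lam : ℂ) ^ (2 * s)) := by
    rw [Complex.ofReal_sum, Finset.sum_mul]
    exact Finset.sum_congr rfl fun i _ => by ring
  rw [h2, keyB r s hs]
  have h3 : ((-1 : ℂ)) ^ s * (-1) ^ s = 1 := by rw [← mul_pow]; norm_num
  push_cast
  calc ((-1 : ℂ)) ^ s / (2 ^ s * (Nat.factorial s : ℂ)) * ((-1) ^ s * (lam : ℂ) ^ (2 * s))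
      = ((-1 : ℂ) ^ s * (-1) ^ s) * ((lam : ℂ) ^ (2 * s) / (2 ^ s * (Nat.factorial s : ℂ))) := by
        ring
    _ = (lam : ℂ) ^ (2 * s) / (2 ^ s * (Nat.factorial s : ℂ)) := by rw [h3, one_mul]

lemma onedim (r : ℕ) (lam : ℝ) :
    (∫ t : ℝ, Complex.exp (Complex.I * lam * t) * (G2r r t : ℂ))
      = Complex.exp (-(lam : ℂ) ^ 2 / 2)
          * ∑ s ∈ range r, ((lam : ℂ)) ^ (2 * s) / ((2 : ℂ) ^ s * (Nat.factorial s : ℂ)) := by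
  have hintg : (fun t : ℝ => Complex.exp (Complex.I * lam * t) * (G2r r t : ℂ))
      = fun t : ℝ => ∑ i ∈ range r,
          ((cCoef r i * ((2 * Real.pi)⁻¹).sqrt : ℝ) : ℂ) * gker (2 * i) lam t := by
    funext t
    unfold G2r Qpoly gker
    push_cast
    rw [Finset.sum_mul, Finset.mul_sum]
    refine Finset.sum_congr rfl fun i _ => ?_
    ring
  rw [hintg, integral_finset_sum _ (fun i _ => (gker_integrable (2 * i) lam).const_mul _)]
  have hstep : ∀ i ∈ range r,
      (∫ t : ℝ, ((cCoef r i * ((2 * Real.pi)⁻¹).sqrt : ℝ) : ℂ) * gker (2 * i) lam t)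
        = ((cCoef r i : ℝ) : ℂ) * Ppoly (2 * i) lam
            * ((((2 * Real.pi)⁻¹).sqrt * Real.sqrt (2 * Real.pi) : ℝ) : ℂ)
            * Complex.exp (-(lam : ℂ) ^ 2 / 2) := by
    intro i _
    rw [integral_const_mul, Mint_eq lam (2 * i), integral_gker_zero]
    push_cast
    ring
  rw [Finset.sum_congr rfl hstep]
  have hsqrt : (((2 * Real.pi)⁻¹).sqrt * Real.sqrt (2 * Real.pi) : ℝ) = 1 := by
    rw [Real.sqrt_inv]
    exact inv_mul_cancel₀ (by positivity)
  rw [hsqrt]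
  have hfin : ∑ i ∈ range r, ((cCoef r i : ℝ) : ℂ) * Ppoly (2 * i) lam * ((1 : ℝ) : ℂ)
        * Complex.exp (-(lam : ℂ) ^ 2 / 2)
      = Complex.exp (-(lam : ℂ) ^ 2 / 2)
          * ∑ i ∈ range r, ((cCoef r i : ℝ) : ℂ) * Ppoly (2 * i) lam := by
    rw [Finset.mul_sum]
    exact Finset.sum_congr rfl fun i _ => by push_cast; ring
  rw [hfin, mainPoly]

end Stmt4Aux

/-- Fourier transform identity for G_{2r}, in one dimension and for
the d-dimensional product kernel. -/
theorem stmt_4 (r : ℕ) (hr : 1 ≤ r) :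
    (∀ lam : ℝ,
      (∫ t : ℝ, Complex.exp (Complex.I * lam * t) * (G2r r t : ℂ)) =
        (Real.exp (-lam ^ 2 / 2) * ∑ s ∈ Finset.range r,
          lam ^ (2 * s) / (2 ^ s * Nat.factorial s) : ℝ)) ∧
    (∀ d : ℕ, 1 ≤ d → ∀ lam : Fin d → ℝ,
      (∫ t : Fin d → ℝ,
          Complex.exp (Complex.I * (∑ j, lam j * t j)) * ((∏ j, G2r r (t j) : ℝ) : ℂ)) =
        (Real.exp (-(∑ j, (lam j) ^ 2) / 2) * ∏ j, ∑ s ∈ Finset.range r,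
          (lam j) ^ (2 * s) / (2 ^ s * Nat.factorial s) : ℝ)) := by
  have h1 : ∀ lam : ℝ,
      (∫ t : ℝ, Complex.exp (Complex.I * lam * t) * (G2r r t : ℂ)) =
        (Real.exp (-lam ^ 2 / 2) * ∑ s ∈ Finset.range r,
          lam ^ (2 * s) / (2 ^ s * Nat.factorial s) : ℝ) := by
    intro lam
    rw [Stmt4Aux.onedim r lam]
    push_cast
    ring
  refine ⟨h1, ?_⟩
  intro d hd lam
  have hsplit : (fun t : Fin d → ℝ =>
      Complex.exp (Complex.I * (∑ j, lam j * t j)) * ((∏ j, G2r r (t j) : ℝ) : ℂ))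
      = fun t : Fin d → ℝ =>
          ∏ j, (Complex.exp (Complex.I * lam j * t j) * (G2r r (t j) : ℂ)) := by
    funext t
    rw [Complex.ofReal_prod]
    rw [show Complex.I * ((∑ j, lam j * t j : ℝ) : ℂ) = ∑ j, Complex.I * (lam j) * (t j) by
      push_cast [Finset.mul_sum]; exact Finset.sum_congr rfl fun j _ => by ring]
    rw [Complex.exp_sum, ← Finset.prod_mul_distrib]
  rw [hsplit, MeasureTheory.integral_fintype_prod_volume_eq_prod
    (fun j (x : ℝ) => Complex.exp (Complex.I * lam j * x) * (G2r r x : ℂ))]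
  have h2 : ∀ j, (∫ x : ℝ, Complex.exp (Complex.I * lam j * x) * (G2r r x : ℂ))
      = ((Real.exp (-(lam j) ^ 2 / 2) * ∑ s ∈ Finset.range r,
          (lam j) ^ (2 * s) / (2 ^ s * Nat.factorial s) : ℝ) : ℂ) := fun j => h1 (lam j)
  rw [Finset.prod_congr rfl (fun j _ => h2 j)]
  rw [← Complex.ofReal_prod]
  congr 1
  rw [Finset.prod_mul_distrib]
  congr 1
  rw [← Real.exp_sum]
  congr 1
  rw [← Finset.sum_neg_distrib, ← Finset.sum_div]
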